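/- Let L be a Leibniz algebra over a field 𝕜 with left center Z, and let ω ∈ C̃^n(L), η ∈ C̃^m(L) be representable cochains. Then ω•η is a cochain in C^{n+m−2}(L); that is, it satisfies the weak skew-symmetry condition (ω•η)_k(…,e_a,e_{a+1},…; f₁,…,f_k) + (ω•η)_k(…,e_{a+1},e_a,…; f₁,…,f_k) = −(ω•η)_{k+1}(…,ê_a,ê_{a+1},…; (e_a,e_{a+1}), f₁,…,f_k). -/

import Mathlib

open scoped TensorProduct

universe u v w

/-- A (left) Leibniz algebra over a field `𝕜`. -/
structure LeibnizAlg (𝕜 : Type u) [Field 𝕜] (L : Type v) [AddCommGroup L] [Module 𝕜 L] where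
  br : L →ₗ[𝕜] L →ₗ[𝕜] L
  leibniz : ∀ a b c : L, br a (br b c) = br (br a b) c + br b (br a c)

namespace LeibnizAlg

variable {𝕜 : Type u} [Field 𝕜] {L : Type v} [AddCommGroup L] [Module 𝕜 L]
variable (A : LeibnizAlg 𝕜 L)

/-- The left center `Z = {z | z ∘ e = 0 for all e}`. -/
def leftCenter : Submodule 𝕜 L where
  carrier := {z | ∀ e : L, A.br z e = 0}
  add_mem' := by
    intro a b ha hb
    simp only [Set.mem_setOf_eq] at *
    intro e
    rw [map_add, LinearMap.add_apply, ha e, hb e, add_zero]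
  zero_mem' := by
    simp only [Set.mem_setOf_eq]
    intro e
    rw [map_zero, LinearMap.zero_apply]
  smul_mem' := by
    intro c x hx
    simp only [Set.mem_setOf_eq] at *
    intro e
    rw [map_smul, LinearMap.smul_apply, hx e, smul_zero]

lemma mem_leftCenter_iff {z : L} : z ∈ A.leftCenter ↔ ∀ e : L, A.br z e = 0 := Iff.rfl

/-- The symmetric product `(a,b) = a∘b + b∘a`. -/
def sp (a b : L) : L := A.br a b + A.br b a

lemma sp_mem (a b : L) : A.sp a b ∈ A.leftCenter := by
  rw [mem_leftCenter_iff]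
  intro e
  have h1 := A.leibniz a b e
  have h2 := A.leibniz b a e
  have hx : A.br (A.br a b) e = A.br a (A.br b e) - A.br b (A.br a e) :=
    eq_sub_iff_add_eq.mpr h1.symm
  have hy : A.br (A.br b a) e = A.br b (A.br a e) - A.br a (A.br b e) :=
    eq_sub_iff_add_eq.mpr h2.symm
  rw [sp, map_add, LinearMap.add_apply, hx, hy]
  abel

/-- The symmetric product, seen as valued in the left center. -/
def spZ (a b : L) : A.leftCenter := ⟨A.sp a b, A.sp_mem a b⟩

lemma br_mem (e : L) (f : A.leftCenter) : A.br e (f : L) ∈ A.leftCenter := by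
  rw [mem_leftCenter_iff]
  intro e'
  have h := A.leibniz e (f : L) e'
  have hf : A.br (f : L) e' = 0 := (A.mem_leftCenter_iff.mp f.2) e'
  have hf2 : A.br (f : L) (A.br e e') = 0 := (A.mem_leftCenter_iff.mp f.2) _
  rw [hf] at h
  rw [map_zero] at h
  rw [hf2, add_zero] at h
  exact h.symm

/-- The bracket of `L` on its left center. -/
def brZ (e : L) (f : A.leftCenter) : A.leftCenter := ⟨A.br e (f : L), A.br_mem e f⟩

/-- The symmetric product as a bilinear map into the left center. -/
noncomputable def spL : L →ₗ[𝕜] L →ₗ[𝕜] A.leftCenter :=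
  LinearMap.mk₂ 𝕜 A.spZ
    (fun a a' b => Subtype.ext (by
      simp only [spZ, sp, map_add, LinearMap.add_apply, Submodule.coe_add]
      abel))
    (fun c a b => Subtype.ext (by
      simp only [spZ, sp, map_smul, LinearMap.smul_apply, SetLike.val_smul, smul_add]))
    (fun a b b' => Subtype.ext (by
      simp only [spZ, sp, map_add, LinearMap.add_apply, Submodule.coe_add]
      abel))
    (fun c a b => Subtype.ext (by
      simp only [spZ, sp, map_smul, LinearMap.smul_apply, SetLike.val_smul, smul_add]))

end LeibnizAlg

/-- `(S, ι)` is (a model of) the symmetric algebra of the module `Z`: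
it satisfies the universal property. -/
def IsSymAlg {𝕜 : Type u} [Field 𝕜] {Z : Type v} [AddCommGroup Z] [Module 𝕜 Z]
    (S : Type w) [CommRing S] [Algebra 𝕜 S] (ι : Z →ₗ[𝕜] S) : Prop :=
  ∀ (B : Type (max u v w)) [CommRing B] [Algebra 𝕜 B] (g : Z →ₗ[𝕜] B),
    ∃! h : S →ₐ[𝕜] B, ∀ z : Z, h (ι z) = g z

section Shuffles

/-- All ways of splitting a list into a signed pair of complementary subsequences. -/
def shSplits {α : Type*} : List α → List (ℤ × List α × List α)
  | [] => [(1, [], [])]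
  | a :: l =>
      ((shSplits l).map fun t => (t.1, a :: t.2.1, t.2.2)) ++
      ((shSplits l).map fun t => ((-1) ^ t.2.1.length * t.1, t.2.1, a :: t.2.2))

/-- Signed sum over all `(p, l.length - p)`-shuffles of the list `l`. -/
def shSum {α : Type*} {S : Type*} [AddCommGroup S] (p : ℕ) (l : List α)
    (F : List α → List α → S) : S :=
  (((shSplits l).filter fun t => t.2.1.length == p).map fun t => t.1 • F t.2.1 t.2.2).sum

/-- Unsigned sum over all `(p, l.length - p)`-shuffles of the list `l`. -/
def shSumU {α : Type*} {S : Type*} [AddCommMonoid S] (p : ℕ) (l : List α)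
    (F : List α → List α → S) : S :=
  (((shSplits l).filter fun t => t.2.1.length == p).map fun t => F t.2.1 t.2.2).sum

end Shuffles

section Cochains

variable {𝕜 : Type u} [Field 𝕜] {L : Type v} [AddCommGroup L] [Module 𝕜 L]
variable (A : LeibnizAlg 𝕜 L)
variable (S : Type w) [CommRing S] [Algebra 𝕜 S]
variable (ι : A.leftCenter →ₗ[𝕜] S)

/-- `ω` is an `n`-cochain in the standard complex `C(L) = C(L, Z, S^•(Z))`:
its component `ω k`, defined on tuples `es` of `n - 2k` elements of `L` and `k`
elements of the left center, is multilinear, symmetric in the `Z`-arguments, and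
weakly skew-symmetric in the `L`-arguments. -/
structure IsCochain (n : ℕ) (ω : ℕ → List L → List A.leftCenter → S) : Prop where
  add_e : ∀ (k : ℕ) (p q : List L) (x y : L) (fs : List A.leftCenter),
    2*k + (p.length + 1 + q.length) = n → fs.length = k →
    ω k (p ++ (x + y) :: q) fs = ω k (p ++ x :: q) fs + ω k (p ++ y :: q) fs
  smul_e : ∀ (k : ℕ) (p q : List L) (c : 𝕜) (x : L) (fs : List A.leftCenter),
    2*k + (p.length + 1 + q.length) = n → fs.length = k →
    ω k (p ++ (c • x) :: q) fs = c • ω k (p ++ x :: q) fs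
  add_f : ∀ (k : ℕ) (es : List L) (p q : List A.leftCenter) (x y : A.leftCenter),
    2*k + es.length = n → p.length + 1 + q.length = k →
    ω k es (p ++ (x + y) :: q) = ω k es (p ++ x :: q) + ω k es (p ++ y :: q)
  smul_f : ∀ (k : ℕ) (es : List L) (p q : List A.leftCenter) (c : 𝕜) (x : A.leftCenter),
    2*k + es.length = n → p.length + 1 + q.length = k →
    ω k es (p ++ (c • x) :: q) = c • ω k es (p ++ x :: q)
  symm_f : ∀ (k : ℕ) (es : List L) (p q : List A.leftCenter) (x y : A.leftCenter),
    2*k + es.length = n → p.length + 2 + q.length = k →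
    ω k es (p ++ x :: y :: q) = ω k es (p ++ y :: x :: q)
  skew : ∀ (k : ℕ) (p q : List L) (x y : L) (fs : List A.leftCenter),
    2*k + (p.length + 2 + q.length) = n → fs.length = k →
    ω k (p ++ x :: y :: q) fs + ω k (p ++ y :: x :: q) fs
      = - ω (k+1) (p ++ q) (A.spZ x y :: fs)

/-- The product of an `n`-cochain and an `m`-cochain. -/
def cmul (n m : ℕ) (ω η : ℕ → List L → List A.leftCenter → S) :
    ℕ → List L → List A.leftCenter → S :=
  fun k es fs => ∑ i ∈ Finset.range (k+1),
    if 2*i ≤ n ∧ 2*(k-i) ≤ m then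
      shSum (n - 2*i) es fun es₁ es₂ =>
        shSumU i fs fun fs₁ fs₂ => ω i es₁ fs₁ * η (k-i) es₂ fs₂
    else 0

/-- The operator `d₀` of the standard complex, where `ρ` is the action of `L` on
`S^•(Z)` by derivations. -/
def cd0 (ρ : L → Derivation 𝕜 S S) (ω : ℕ → List L → List A.leftCenter → S) :
    ℕ → List L → List A.leftCenter → S :=
  fun k es fs =>
    (∑ a ∈ Finset.range es.length,
      (-1 : ℤ)^a • ρ (es.getD a 0) (ω k (es.eraseIdx a) fs))
    + ∑ a ∈ Finset.range es.length, ∑ b ∈ Finset.Ico (a+1) es.length,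
        (-1 : ℤ)^(a+1) •
          ω k ((es.eraseIdx a).set (b-1) (A.br (es.getD a 0) (es.getD b 0))) fs

/-- The operator `δ` of the standard complex. -/
def cdel (ω : ℕ → List L → List A.leftCenter → S) :
    ℕ → List L → List A.leftCenter → S :=
  fun k es fs => ∑ j ∈ Finset.range fs.length,
    ω (k-1) (((fs.getD j 0 : A.leftCenter) : L) :: es) (fs.eraseIdx j)

/-- The symmetric product with values pushed into `S = S^•(Z)`. -/
noncomputable def spS : L →ₗ[𝕜] L →ₗ[𝕜] S := (A.spL).compr₂ ι

/-- The `S^•(Z)`-bilinear extension of the symmetric product to `S^•(Z) ⊗ L`. -/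
noncomputable def pairT : (S ⊗[𝕜] L) →ₗ[𝕜] (S ⊗[𝕜] L) →ₗ[𝕜] S :=
  TensorProduct.curry <|
    (TensorProduct.lift (LinearMap.mul 𝕜 S)).comp <|
      (TensorProduct.map (TensorProduct.lift (LinearMap.mul 𝕜 S))
        (TensorProduct.lift (spS A S ι))).comp
        (TensorProduct.tensorTensorTensorComm 𝕜 S L S L).toLinearMap

/-- `ω` is a representable `n`-cochain: each of the maps
`e ↦ ω k (es ++ [e]) fs` lies in the image of `φ = pairT`. -/
def IsRepr (n : ℕ) (ω : ℕ → List L → List A.leftCenter → S) : Prop :=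
  ∀ (k : ℕ) (es : List L) (fs : List A.leftCenter),
    2*k + (es.length + 1) = n → fs.length = k →
    ∃ x : S ⊗[𝕜] L, ∀ e : L, pairT A S ι x ((1 : S) ⊗ₜ[𝕜] e) = ω k (es ++ [e]) fs

/-- `ωt` is a choice of `φ`-preimages `ω̃` for the representable cochain `ω`. -/
def IsPre (n : ℕ) (ω : ℕ → List L → List A.leftCenter → S)
    (ωt : ℕ → List L → List A.leftCenter → S ⊗[𝕜] L) : Prop :=
  ∀ (k : ℕ) (es : List L) (fs : List A.leftCenter),
    2*k + (es.length + 1) = n → fs.length = k →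
    ∀ e : L, pairT A S ι (ωt k es fs) ((1 : S) ⊗ₜ[𝕜] e) = ω k (es ++ [e]) fs

/-- `ωc k es x fs` is the extension `ω̌` of `ω (k+1) es (·::fs)` from `Z` to all of
`S = S^•(Z)` in its first `Z`-slot, by the Leibniz rule. -/
structure IsExt (n : ℕ) (ω : ℕ → List L → List A.leftCenter → S)
    (ωc : ℕ → List L → S → List A.leftCenter → S) : Prop where
  on_gen : ∀ (k : ℕ) (es : List L) (fs : List A.leftCenter) (f : A.leftCenter),
    2*(k+1) + es.length = n → fs.length = k →
    ωc k es (ι f) fs = ω (k+1) es (f :: fs)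
  map_add : ∀ (k : ℕ) (es : List L) (fs : List A.leftCenter) (x y : S),
    2*(k+1) + es.length = n → fs.length = k →
    ωc k es (x + y) fs = ωc k es x fs + ωc k es y fs
  map_smul : ∀ (k : ℕ) (es : List L) (fs : List A.leftCenter) (c : 𝕜) (x : S),
    2*(k+1) + es.length = n → fs.length = k →
    ωc k es (c • x) fs = c • ωc k es x fs
  mul_rule : ∀ (k : ℕ) (es : List L) (fs : List A.leftCenter) (x y : S),
    2*(k+1) + es.length = n → fs.length = k →
    ωc k es (x * y) fs = x * ωc k es y fs + y * ωc k es x fs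

/-- The operation `ω ◇ η` built from the Leibniz-rule extension `ωc` of `ω`. -/
def cdiam (n m : ℕ) (ωc : ℕ → List L → S → List A.leftCenter → S)
    (η : ℕ → List L → List A.leftCenter → S) : ℕ → List L → List A.leftCenter → S :=
  fun k es fs => ∑ i ∈ Finset.range (k+1),
    if 2*(i+1) ≤ n ∧ 2*(k-i) ≤ m then
      shSum (n - 2*i - 2) es fun es₁ es₂ =>
        shSumU (k-i) fs fun fs₁ fs₂ => ωc i es₁ (η (k-i) es₂ fs₁) fs₂
    else 0

/-- The operation `ω • η` built from chosen `φ`-preimages `ωt`, `ηt`. -/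
noncomputable def cbull (n m : ℕ)
    (ωt ηt : ℕ → List L → List A.leftCenter → S ⊗[𝕜] L) :
    ℕ → List L → List A.leftCenter → S :=
  fun k es fs => (-1 : ℤ)^(m-1) • ∑ i ∈ Finset.range (k+1),
    if 2*i + 1 ≤ n ∧ 2*(k-i) + 1 ≤ m then
      shSum (n - 2*i - 1) es fun es₁ es₂ =>
        shSumU i fs fun fs₁ fs₂ => pairT A S ι (ωt i es₁ fs₁) (ηt (k-i) es₂ fs₂)
    else 0

/-- The bracket `{ω, η} = ω•η + ω◇η − (−1)^{nm} η◇ω` of representable cochains. -/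
noncomputable def cpbr (n m : ℕ)
    (ω η : ℕ → List L → List A.leftCenter → S)
    (ωt ηt : ℕ → List L → List A.leftCenter → S ⊗[𝕜] L)
    (ωc ηc : ℕ → List L → S → List A.leftCenter → S) :
    ℕ → List L → List A.leftCenter → S :=
  fun k es fs => cbull A S ι n m ωt ηt k es fs + cdiam A S n m ωc η k es fs
    - (-1 : ℤ)^(n*m) • cdiam A S m n ηc ω k es fs

/-- The canonical 3-cochain `Θ`. -/
def ThetaC : ℕ → List L → List A.leftCenter → S :=
  fun k es fs => match k, es, fs with
    | 0, [e₁, e₂, e₃], [] => ι (A.spZ (A.br e₁ e₂) e₃)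
    | 1, [e], [f] => - ι (A.spZ e (f : L))
    | _, _, _ => 0

/-- The 2-cochain `ζ` with `ζ₀ = (·,·)` and `ζ₁(f) = −2f`. -/
def zetaC : ℕ → List L → List A.leftCenter → S :=
  fun k es fs => match k, es, fs with
    | 0, [e₁, e₂], [] => ι (A.spZ e₁ e₂)
    | 1, [], [f] => (-2 : 𝕜) • ι f
    | _, _, _ => 0

/-- The representable 1-cochain `e^♭ = (e, ·)`. -/
def eflat (e : L) : ℕ → List L → List A.leftCenter → S :=
  fun k es fs => match k, es, fs with
    | 0, [e'], [] => ι (A.spZ e e')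
    | _, _, _ => 0

end Cochains

section AuxShuffle

variable {α : Type*} {β : Type*} {M : Type*}

lemma shSplits_len (l : List α) : ∀ t ∈ shSplits l, t.2.1.length + t.2.2.length = l.length := by
  induction l with
  | nil => intro t ht; simp [shSplits] at ht; subst ht; simp
  | cons a l ih =>
    intro t ht
    simp only [shSplits, List.mem_append, List.mem_map] at ht
    rcases ht with ⟨u, hu, rfl⟩ | ⟨u, hu, rfl⟩ <;>
      · have := ih u hu; simp only [List.length_cons]; omega

lemma sum_map_congr [AddCommMonoid M] {l : List β} {f g : β → M} (h : ∀ t ∈ l, f t = g t) :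
    (l.map f).sum = (l.map g).sum := by rw [List.map_congr_left h]

lemma sum_map_add' [AddCommMonoid M] (l : List β) (f g : β → M) :
    (l.map fun t => f t + g t).sum = (l.map f).sum + (l.map g).sum := by
  induction l with
  | nil => simp
  | cons a l ih => simp only [List.map_cons, List.sum_cons, ih]; abel

lemma sum_filter_eq' [AddCommMonoid M] (l : List β) (P : β → Bool) (f : β → M) :
    ((l.filter P).map f).sum = (l.map fun t => if P t then f t else 0).sum := by
  induction l with
  | nil => simp
  | cons a l ih => by_cases h : P a <;> simp [List.filter_cons, h, ih]

lemma sum_map_pair [AddCommGroup M] {l : List β} {f g h : β → M}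
    (H : ∀ t ∈ l, f t + g t = -(h t)) :
    (l.map f).sum + (l.map g).sum = -((l.map h).sum) := by
  induction l with
  | nil => simp
  | cons a l ih =>
    simp only [List.map_cons, List.sum_cons]
    have h1 := H a List.mem_cons_self
    have h2 := ih (fun t ht => H t (List.mem_cons_of_mem _ ht))
    rw [show f a + (l.map f).sum + (g a + (l.map g).sum)
        = (f a + g a) + ((l.map f).sum + (l.map g).sum) by abel, h1, h2]
    abel

/-- Unfiltered signed sum over all splits. -/
def Sp [AddCommGroup M] (l : List α) (F : List α → List α → M) : M :=
  ((shSplits l).map fun t => t.1 • F t.2.1 t.2.2).sum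

variable [AddCommGroup M]

lemma Sp_congr {l : List α} {F G : List α → List α → M} (h : ∀ a b, F a b = G a b) :
    Sp l F = Sp l G := by
  unfold Sp; exact sum_map_congr (fun t _ => by rw [h])

lemma Sp_add (l : List α) (F G : List α → List α → M) :
    Sp l (fun a b => F a b + G a b) = Sp l F + Sp l G := by
  unfold Sp
  rw [← sum_map_add']
  exact sum_map_congr (fun t _ => smul_add _ _ _)

lemma Sp_zero (l : List α) : Sp l (fun _ _ => (0:M)) = 0 := by
  unfold Sp
  rw [sum_map_congr (fun t _ => smul_zero t.1)]
  induction shSplits l with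
  | nil => simp
  | cons a l ih => simp [ih]

lemma Sp_neg (l : List α) (F : List α → List α → M) :
    Sp l (fun a b => -(F a b)) = -(Sp l F) := by
  have h : Sp l (fun a b => -(F a b)) + Sp l F = 0 := by
    rw [← Sp_add, Sp_congr (G := fun _ _ => (0:M)) (fun a b => by abel), Sp_zero]
  exact eq_neg_of_add_eq_zero_left h

lemma Sp_cons (a : α) (l : List α) (F : List α → List α → M) :
    Sp (a::l) F = Sp l (fun u v => F (a::u) v)
      + Sp l (fun u v => ((-1:ℤ)^u.length) • F u (a::v)) := by
  unfold Sp
  simp only [shSplits, List.map_append, List.sum_append, List.map_map]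
  congr 1
  refine sum_map_congr (fun t _ => ?_)
  simp only [Function.comp]
  rw [mul_comm, mul_smul]

lemma neg_one_pow_sq_smul (e : ℕ) (z : M) : ((-1:ℤ)^e) • ((-1:ℤ)^e) • z = z := by
  rw [smul_smul, ← pow_add, Even.neg_one_pow ⟨e, rfl⟩, one_smul]

lemma Sp_swap (x y : α) :
    ∀ (P : List α) (Q : List α) (F G1 G2 : List α → List α → M),
    (∀ p q b, F (p++x::y::q) b + F (p++y::x::q) b = G1 (p++q) b) →
    (∀ a p q, F a (p++x::y::q) + F a (p++y::x::q) = G2 a (p++q)) →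
    Sp (P++x::y::Q) F + Sp (P++y::x::Q) F = Sp (P++Q) (fun a b => G1 a b + G2 a b) := by
  intro P
  induction P with
  | nil =>
    intro Q F G1 G2 h1 h2
    simp only [List.nil_append]
    rw [Sp_cons, Sp_cons, Sp_cons, Sp_cons, Sp_cons, Sp_cons]
    simp only [List.length_cons]
    set a1 := Sp Q fun u v => F (x :: y :: u) v with ha1
    set a2 := Sp Q fun u v => (-1:ℤ) ^ u.length • F (x :: u) (y :: v) with ha2
    set a3 := Sp Q fun u v => (-1:ℤ) ^ (u.length + 1) • F (y :: u) (x :: v) with ha3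
    set a4 := Sp Q fun u v => (-1:ℤ) ^ u.length • (-1:ℤ) ^ u.length • F u (x :: y :: v) with ha4
    set b1 := Sp Q fun u v => F (y :: x :: u) v with hb1
    set b2 := Sp Q fun u v => (-1:ℤ) ^ u.length • F (y :: u) (x :: v) with hb2
    set b3 := Sp Q fun u v => (-1:ℤ) ^ (u.length + 1) • F (x :: u) (y :: v) with hb3
    set b4 := Sp Q fun u v => (-1:ℤ) ^ u.length • (-1:ℤ) ^ u.length • F u (y :: x :: v) with hb4
    have e1 : a1 + b1 = Sp Q G1 := by
      rw [ha1, hb1, ← Sp_add]; exact Sp_congr (fun a b => h1 [] a b)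
    have e4 : a4 + b4 = Sp Q G2 := by
      rw [ha4, hb4,
        Sp_congr (G := fun u v => F u (x::y::v)) (fun a b => neg_one_pow_sq_smul _ _),
        Sp_congr (G := fun u v => F u (y::x::v)) (fun a b => neg_one_pow_sq_smul _ _),
        ← Sp_add]
      exact Sp_congr (fun a b => h2 a [] b)
    have e2 : a2 + b3 = 0 := by
      rw [ha2, hb3, ← Sp_add, Sp_congr (G := fun _ _ => (0:M)) (fun a b => by
        rw [pow_succ, mul_neg_one, neg_smul, add_neg_cancel]), Sp_zero]
    have e3 : a3 + b2 = 0 := by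
      rw [ha3, hb2, ← Sp_add, Sp_congr (G := fun _ _ => (0:M)) (fun a b => by
        rw [pow_succ, mul_neg_one, neg_smul]; abel), Sp_zero]
    rw [Sp_add, ← e1, ← e4,
      show a1 + a2 + (a3 + a4) + (b1 + b2 + (b3 + b4))
        = a1 + b1 + (a4 + b4) + ((a2 + b3) + (a3 + b2)) from by abel,
      e2, e3]
    abel
  | cons c P ih =>
    intro Q F G1 G2 h1 h2
    simp only [List.cons_append]
    rw [Sp_cons, Sp_cons, Sp_cons]
    have i1 := ih Q (fun u v => F (c::u) v) (fun u v => G1 (c::u) v) (fun u v => G2 (c::u) v)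
      (fun p q b => h1 (c::p) q b) (fun a p q => h2 (c::a) p q)
    have i2 := ih Q (fun u v => ((-1:ℤ)^u.length) • F u (c::v))
      (fun u v => ((-1:ℤ)^u.length) • G1 u (c::v))
      (fun u v => ((-1:ℤ)^u.length) • G2 u (c::v))
      (fun p q b => by
        simp only [List.length_append, List.length_cons]
        rw [show p.length + (q.length + 1 + 1) = p.length + q.length + 2 from by omega,
          pow_add, neg_one_sq, mul_one, ← smul_add, h1 p q (c::b)])
      (fun a p q => by
        rw [← smul_add]; exact congrArg _ (h2 a (c::p) q))
    set a1 := Sp (P ++ x :: y :: Q) fun u v => F (c :: u) v with ha1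
    set a2 := Sp (P ++ x :: y :: Q) fun u v => (-1:ℤ) ^ u.length • F u (c :: v) with ha2
    set b1 := Sp (P ++ y :: x :: Q) fun u v => F (c :: u) v with hb1
    set b2 := Sp (P ++ y :: x :: Q) fun u v => (-1:ℤ) ^ u.length • F u (c :: v) with hb2
    rw [show a1 + a2 + (b1 + b2) = (a1 + b1) + (a2 + b2) from by abel, ha1, hb1, ha2, hb2,
      i1, i2]
    congr 1
    exact Sp_congr (fun a b => by rw [smul_add])

lemma shSum_eq_Sp (r s : ℕ) (l : List α) (F : List α → List α → M)
    (h : ∀ t ∈ shSplits l, t.2.1.length = r → t.2.2.length = s) :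
    shSum r l F = Sp l (fun a b => if a.length = r ∧ b.length = s then F a b else 0) := by
  unfold shSum Sp
  rw [sum_filter_eq']
  refine sum_map_congr (fun t ht => ?_)
  by_cases hr : t.2.1.length = r
  · simp [hr, h t ht hr]
  · simp [hr]

lemma shSum_congr {p : ℕ} {l : List α} {F G : List α → List α → M}
    (h : ∀ a b, F a b = G a b) : shSum p l F = shSum p l G := by
  unfold shSum; exact sum_map_congr (fun t _ => by rw [h])

lemma shSum_add (p : ℕ) (l : List α) (F G : List α → List α → M) :
    shSum p l (fun a b => F a b + G a b) = shSum p l F + shSum p l G := by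
  unfold shSum
  rw [← sum_map_add']
  exact sum_map_congr (fun t _ => smul_add _ _ _)

lemma shSum_zero (p : ℕ) (l : List α) : shSum p l (fun _ _ => (0:M)) = 0 := by
  unfold shSum
  rw [sum_map_congr (fun t _ => smul_zero t.1)]
  induction (shSplits l).filter _ with
  | nil => simp
  | cons a l ih => simp [ih]

lemma shSumU_cons (p : ℕ) (a : α) (l : List α) (F : List α → List α → M) :
    shSumU p (a::l) F
      = (((shSplits l).filter fun t => t.2.1.length + 1 == p).map fun t =>
          F (a::t.2.1) t.2.2).sum
        + shSumU p l (fun u v => F u (a::v)) := by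
  unfold shSumU
  simp only [shSplits, List.filter_append, List.filter_map, List.map_append, List.map_map,
    List.sum_append, Function.comp_def, List.length_cons]

end AuxShuffle

section AuxPair

variable {𝕜 : Type u} [Field 𝕜] {L : Type v} [AddCommGroup L] [Module 𝕜 L]
variable (A : LeibnizAlg 𝕜 L)
variable (S : Type w) [CommRing S] [Algebra 𝕜 S]
variable (ι : A.leftCenter →ₗ[𝕜] S)

lemma spZ_comm (a b : L) : A.spZ a b = A.spZ b a :=
  Subtype.ext (by simp [LeibnizAlg.spZ, LeibnizAlg.sp, add_comm])

lemma pairT_tmul (s₁ s₂ : S) (e₁ e₂ : L) :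
    pairT A S ι (s₁ ⊗ₜ e₁) (s₂ ⊗ₜ e₂) = s₁ * s₂ * ι (A.spZ e₁ e₂) := by
  simp [pairT, spS, LeibnizAlg.spL, TensorProduct.tensorTensorTensorComm_tmul,
    LinearMap.mul_apply']

lemma pairT_add_left (a b : S ⊗[𝕜] L) (Y : S ⊗[𝕜] L) :
    pairT A S ι (a + b) Y = pairT A S ι a Y + pairT A S ι b Y := by
  rw [map_add, LinearMap.add_apply]

lemma pairT_smul_right' (a : S ⊗[𝕜] L) (s : S) (e : L) :
    pairT A S ι a (s ⊗ₜ e) = s * pairT A S ι a ((1:S) ⊗ₜ e) := by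
  induction a using TensorProduct.induction_on with
  | zero => simp
  | tmul s₁ e₁ => rw [pairT_tmul, pairT_tmul]; ring
  | add u v hu hv => rw [pairT_add_left, pairT_add_left, hu, hv, mul_add]

lemma pairT_ext_zero (a : S ⊗[𝕜] L) (h : ∀ e : L, pairT A S ι a ((1:S) ⊗ₜ e) = 0)
    (Y : S ⊗[𝕜] L) : pairT A S ι a Y = 0 := by
  induction Y using TensorProduct.induction_on with
  | zero => simp
  | tmul s e => rw [pairT_smul_right', h, mul_zero]
  | add u v hu hv => rw [map_add, hu, hv, add_zero]

lemma pairT_comm (X Y : S ⊗[𝕜] L) : pairT A S ι X Y = pairT A S ι Y X := by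
  induction X using TensorProduct.induction_on with
  | zero => simp
  | tmul s₁ e₁ =>
    induction Y using TensorProduct.induction_on with
    | zero => simp
    | tmul s₂ e₂ => rw [pairT_tmul, pairT_tmul, spZ_comm]; ring
    | add u v hu hv => rw [map_add, pairT_add_left, hu, hv]
  | add u v hu hv =>
    rw [pairT_add_left, hu, hv, ← map_add]

lemma keyfirst (n : ℕ) (ω : ℕ → List L → List A.leftCenter → S)
    (hω : IsCochain A S n ω) (ωt : ℕ → List L → List A.leftCenter → S ⊗[𝕜] L)
    (hωt : IsPre A S ι n ω ωt) (i : ℕ) (p q : List L) (x y : L)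
    (c : List A.leftCenter) (hlen : 2*i + (p.length + 2 + q.length) + 1 = n)
    (hc : c.length = i) (Y : S ⊗[𝕜] L) :
    pairT A S ι (ωt i (p ++ x :: y :: q) c) Y + pairT A S ι (ωt i (p ++ y :: x :: q) c) Y
      = - pairT A S ι (ωt (i+1) (p ++ q) (A.spZ x y :: c)) Y := by
  have hz : ∀ Y, pairT A S ι (ωt i (p ++ x :: y :: q) c + ωt i (p ++ y :: x :: q) c
      + ωt (i+1) (p ++ q) (A.spZ x y :: c)) Y = 0 := by
    refine pairT_ext_zero A S ι _ (fun e => ?_)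
    rw [pairT_add_left, pairT_add_left]
    rw [hωt i (p ++ x :: y :: q) c (by simp only [List.length_append, List.length_cons]; omega)
      hc e]
    rw [hωt i (p ++ y :: x :: q) c (by simp only [List.length_append, List.length_cons]; omega)
      hc e]
    rw [hωt (i+1) (p ++ q) (A.spZ x y :: c)
      (by simp only [List.length_append]; omega)
      (by simp only [List.length_cons]; omega) e]
    have hs := hω.skew i p (q ++ [e]) x y c
      (by simp only [List.length_append, List.length_cons, List.length_nil]; omega) hc
    simp only [List.append_assoc, List.cons_append, List.nil_append] at hs ⊢
    rw [hs]
    abel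
  have h := hz Y
  rw [pairT_add_left, pairT_add_left] at h
  linear_combination h

lemma keysecond (m : ℕ) (η : ℕ → List L → List A.leftCenter → S)
    (hη : IsCochain A S m η) (ηt : ℕ → List L → List A.leftCenter → S ⊗[𝕜] L)
    (hηt : IsPre A S ι m η ηt) (j : ℕ) (p q : List L) (x y : L)
    (d : List A.leftCenter) (hlen : 2*j + (p.length + 2 + q.length) + 1 = m)
    (hd : d.length = j) (X : S ⊗[𝕜] L) :
    pairT A S ι X (ηt j (p ++ x :: y :: q) d) + pairT A S ι X (ηt j (p ++ y :: x :: q) d)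
      = - pairT A S ι X (ηt (j+1) (p ++ q) (A.spZ x y :: d)) := by
  rw [pairT_comm, pairT_comm A S ι X, pairT_comm A S ι X]
  exact keyfirst A S ι m η hη ηt hηt j p q x y d hlen hd X

end AuxPair


section Theorems

variable {𝕜 : Type u} [Field 𝕜] {L : Type v} [AddCommGroup L] [Module 𝕜 L]

theorem cbull_isCochain (A : LeibnizAlg 𝕜 L) (S : Type w) [CommRing S] [Algebra 𝕜 S]
    (ι : A.leftCenter →ₗ[𝕜] S) (hS : IsSymAlg S ι)
    (n m : ℕ) (ω η : ℕ → List L → List A.leftCenter → S)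
    (hω : IsCochain A S n ω) (hη : IsCochain A S m η)
    (ωt ηt : ℕ → List L → List A.leftCenter → S ⊗[𝕜] L)
    (hωt : IsPre A S ι n ω ωt) (hηt : IsPre A S ι m η ηt) :
    ∀ (k : ℕ) (p q : List L) (x y : L) (fs : List A.leftCenter),
      2*k + (p.length + 2 + q.length) + 2 = n + m → fs.length = k →
      cbull A S ι n m ωt ηt k (p ++ x :: y :: q) fs
        + cbull A S ι n m ωt ηt k (p ++ y :: x :: q) fs
        = - cbull A S ι n m ωt ηt (k+1) (p ++ q) (A.spZ x y :: fs) := by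
  intro k P Q x y fs hlen hfs
  simp only [cbull]
  rw [← smul_add, ← smul_neg]
  congr 1
  trans ((∑ i ∈ Finset.range (k+1),
      (if 2*i + 1 ≤ n ∧ 2*(k-i) + 1 ≤ m then
          Sp (P++Q) (fun a b =>
            if a.length + 2 = n - 2*i - 1 ∧ b.length = m - 2*(k-i) - 1 then
              -((((shSplits fs).filter fun t => t.2.1.length == i).map fun t =>
                pairT A S ι (ωt (i+1) a (A.spZ x y :: t.2.1)) (ηt (k-i) b t.2.2)).sum)
            else 0)
        else 0))
    + (∑ i ∈ Finset.range (k+1),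
      (if 2*i + 1 ≤ n ∧ 2*(k-i) + 1 ≤ m then
          Sp (P++Q) (fun a b =>
            if a.length = n - 2*i - 1 ∧ b.length + 2 = m - 2*(k-i) - 1 then
              -((((shSplits fs).filter fun t => t.2.1.length == i).map fun t =>
                pairT A S ι (ωt i a t.2.1) (ηt (k-i+1) b (A.spZ x y :: t.2.2))).sum)
            else 0)
        else 0)))
  · rw [← Finset.sum_add_distrib, ← Finset.sum_add_distrib]
    refine Finset.sum_congr rfl (fun i hi => ?_)
    have hik : i ≤ k := Nat.lt_succ_iff.mp (Finset.mem_range.mp hi)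
    by_cases hg : 2*i + 1 ≤ n ∧ 2*(k-i) + 1 ≤ m
    · rw [if_pos hg, if_pos hg, if_pos hg, if_pos hg]
      rw [shSum_eq_Sp (n - 2*i - 1) (m - 2*(k-i) - 1) _ _ (fun t ht h1 => by
            have := shSplits_len _ t ht
            simp only [List.length_append, List.length_cons] at this ⊢
            omega),
          shSum_eq_Sp (n - 2*i - 1) (m - 2*(k-i) - 1) _ _ (fun t ht h1 => by
            have := shSplits_len _ t ht
            simp only [List.length_append, List.length_cons] at this ⊢
            omega)]
      conv_rhs => rw [← Sp_add]
      refine Sp_swap x y P Q _ _ _ ?_ ?_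
      · intro p' q' b
        by_cases hc : p'.length + q'.length + 2 = n - 2*i - 1
            ∧ b.length = m - 2*(k-i) - 1
        · rw [if_pos ⟨by simp only [List.length_append, List.length_cons]; omega, hc.2⟩,
            if_pos ⟨by simp only [List.length_append, List.length_cons]; omega, hc.2⟩,
            if_pos ⟨by simp only [List.length_append]; omega, hc.2⟩]
          simp only [shSumU]
          refine sum_map_pair (fun t ht => ?_)
          have hti : t.2.1.length = i := by simpa using (List.mem_filter.mp ht).2
          exact keyfirst A S ι n ω hω ωt hωt i p' q' x y t.2.1
            (by have := hc.1; omega) hti _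
        · have hn1 : ¬((p' ++ x :: y :: q').length = n - 2*i - 1
              ∧ b.length = m - 2*(k-i) - 1) := by
            intro h
            have h1 := h.1
            simp only [List.length_append, List.length_cons] at h1
            exact hc ⟨by omega, h.2⟩
          have hn2 : ¬((p' ++ y :: x :: q').length = n - 2*i - 1
              ∧ b.length = m - 2*(k-i) - 1) := by
            intro h
            have h1 := h.1
            simp only [List.length_append, List.length_cons] at h1
            exact hc ⟨by omega, h.2⟩
          have hn3 : ¬((p' ++ q').length + 2 = n - 2*i - 1
              ∧ b.length = m - 2*(k-i) - 1) := by
            intro h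
            have h1 := h.1
            simp only [List.length_append] at h1
            exact hc ⟨by omega, h.2⟩
          rw [if_neg hn1, if_neg hn2, if_neg hn3, add_zero]
      · intro a p' q'
        by_cases hc : a.length = n - 2*i - 1
            ∧ p'.length + q'.length + 2 = m - 2*(k-i) - 1
        · rw [if_pos ⟨hc.1, by simp only [List.length_append, List.length_cons]; omega⟩,
            if_pos ⟨hc.1, by simp only [List.length_append, List.length_cons]; omega⟩,
            if_pos ⟨hc.1, by simp only [List.length_append]; omega⟩]
          simp only [shSumU]
          refine sum_map_pair (fun t ht => ?_)
          have hti : t.2.1.length = i := by simpa using (List.mem_filter.mp ht).2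
          have htl : t.2.2.length = k - i := by
            have := shSplits_len _ t (List.mem_filter.mp ht).1; omega
          exact keysecond A S ι m η hη ηt hηt (k-i) p' q' x y t.2.2
            (by have := hc.2; omega) htl _
        · have hn1 : ¬(a.length = n - 2*i - 1
              ∧ (p' ++ x :: y :: q').length = m - 2*(k-i) - 1) := by
            intro h
            have h2 := h.2
            simp only [List.length_append, List.length_cons] at h2
            exact hc ⟨h.1, by omega⟩
          have hn2 : ¬(a.length = n - 2*i - 1
              ∧ (p' ++ y :: x :: q').length = m - 2*(k-i) - 1) := by
            intro h
            have h2 := h.2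
            simp only [List.length_append, List.length_cons] at h2
            exact hc ⟨h.1, by omega⟩
          have hn3 : ¬(a.length = n - 2*i - 1
              ∧ (p' ++ q').length + 2 = m - 2*(k-i) - 1) := by
            intro h
            have h2 := h.2
            simp only [List.length_append] at h2
            exact hc ⟨h.1, by omega⟩
          rw [if_neg hn1, if_neg hn2, if_neg hn3, add_zero]
    · rw [if_neg hg, if_neg hg, if_neg hg, if_neg hg]
  · have hsplit : ∀ i' ∈ Finset.range (k+1+1),
        (if 2*i' + 1 ≤ n ∧ 2*(k+1-i') + 1 ≤ m then
          shSum (n - 2*i' - 1) (P++Q) (fun es₁ es₂ =>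
            shSumU i' (A.spZ x y :: fs) fun fs₁ fs₂ =>
              pairT A S ι (ωt i' es₁ fs₁) (ηt (k+1-i') es₂ fs₂))
        else 0)
        = (if 2*i' + 1 ≤ n ∧ 2*(k+1-i') + 1 ≤ m then
            shSum (n - 2*i' - 1) (P++Q) (fun a b =>
              (((shSplits fs).filter fun t => t.2.1.length + 1 == i').map fun t =>
                pairT A S ι (ωt i' a (A.spZ x y :: t.2.1)) (ηt (k+1-i') b t.2.2)).sum)
          else 0)
        + (if 2*i' + 1 ≤ n ∧ 2*(k+1-i') + 1 ≤ m then
            shSum (n - 2*i' - 1) (P++Q) (fun a b =>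
              shSumU i' fs fun c d =>
                pairT A S ι (ωt i' a c) (ηt (k+1-i') b (A.spZ x y :: d)))
          else 0) := by
      intro i' _
      by_cases hg : 2*i' + 1 ≤ n ∧ 2*(k+1-i') + 1 ≤ m
      · rw [if_pos hg, if_pos hg, if_pos hg, ← shSum_add]
        exact shSum_congr (fun a b => shSumU_cons i' _ fs _)
      · rw [if_neg hg, if_neg hg, if_neg hg, add_zero]
    rw [Finset.sum_congr rfl hsplit, Finset.sum_add_distrib, neg_add]
    congr 1
    · conv_rhs => rw [Finset.sum_range_succ']
      have h0 : (if 2*0 + 1 ≤ n ∧ 2*(k+1-0) + 1 ≤ m then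
          shSum (n - 2*0 - 1) (P++Q) (fun a b =>
            (((shSplits fs).filter fun t => t.2.1.length + 1 == 0).map fun t =>
              pairT A S ι (ωt 0 a (A.spZ x y :: t.2.1)) (ηt (k+1-0) b t.2.2)).sum)
        else 0) = 0 := by
        have hnil : ((shSplits fs).filter fun t => t.2.1.length + 1 == 0) = [] :=
          List.filter_eq_nil_iff.mpr (fun t ht => by simp)
        simp only [hnil, List.map_nil, List.sum_nil]
        split
        · exact shSum_zero _ _
        · rfl
      rw [h0, add_zero, ← Finset.sum_neg_distrib]
      refine Finset.sum_congr rfl (fun i hi => ?_)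
      have hik : i ≤ k := Nat.lt_succ_iff.mp (Finset.mem_range.mp hi)
      by_cases hgp : 2*(i+1) + 1 ≤ n ∧ 2*(k+1-(i+1)) + 1 ≤ m
      · have hg : 2*i + 1 ≤ n ∧ 2*(k-i) + 1 ≤ m := by omega
        rw [if_pos hg, if_pos hgp]
        rw [shSum_eq_Sp (n - 2*(i+1) - 1) (m - 2*(k-i) - 1) _ _ (fun t ht h1 => by
          have := shSplits_len _ t ht
          simp only [List.length_append] at this ⊢
          omega)]
        rw [← Sp_neg]
        refine Sp_congr (fun a b => ?_)
        simp only [show ((shSplits fs).filter fun t => t.2.1.length + 1 == i+1)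
            = ((shSplits fs).filter fun t => t.2.1.length == i) from
            List.filter_congr (fun t _ => by
              rw [Bool.eq_iff_iff, beq_iff_eq, beq_iff_eq]; omega),
          show k+1-(i+1) = k-i from by omega]
        have hcond : (a.length + 2 = n - 2*i - 1 ∧ b.length = m - 2*(k-i) - 1)
            ↔ (a.length = n - 2*(i+1) - 1 ∧ b.length = m - 2*(k-i) - 1) := by omega
        simp only [hcond]
        split
        · rfl
        · rw [neg_zero]
      · by_cases hg : 2*i + 1 ≤ n ∧ 2*(k-i) + 1 ≤ m
        · rw [if_pos hg, if_neg hgp, neg_zero]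
          rw [Sp_congr (G := fun _ _ => (0:S)) (fun a b => by
            rw [if_neg (fun h => by have := h.1; omega)]), Sp_zero]
        · rw [if_neg hg, if_neg hgp, neg_zero]
    · conv_rhs => rw [Finset.sum_range_succ]
      have htop : (if 2*(k+1) + 1 ≤ n ∧ 2*(k+1-(k+1)) + 1 ≤ m then
          shSum (n - 2*(k+1) - 1) (P++Q) (fun a b =>
            shSumU (k+1) fs fun c d =>
              pairT A S ι (ωt (k+1) a c) (ηt (k+1-(k+1)) b (A.spZ x y :: d)))
        else 0) = 0 := by
        have hnil : ((shSplits fs).filter fun t => t.2.1.length == k+1) = [] :=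
          List.filter_eq_nil_iff.mpr (fun t ht => by
            have := shSplits_len _ t ht
            simp only [beq_iff_eq]
            omega)
        simp only [shSumU, hnil, List.map_nil, List.sum_nil]
        split
        · exact shSum_zero _ _
        · rfl
      rw [htop, add_zero, ← Finset.sum_neg_distrib]
      refine Finset.sum_congr rfl (fun i hi => ?_)
      have hik : i ≤ k := Nat.lt_succ_iff.mp (Finset.mem_range.mp hi)
      by_cases hgp : 2*i + 1 ≤ n ∧ 2*(k+1-i) + 1 ≤ m
      · have hg : 2*i + 1 ≤ n ∧ 2*(k-i) + 1 ≤ m := by omega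
        rw [if_pos hg, if_pos hgp]
        rw [shSum_eq_Sp (n - 2*i - 1) (m - 2*(k-i) - 3) _ _ (fun t ht h1 => by
          have := shSplits_len _ t ht
          simp only [List.length_append] at this ⊢
          omega)]
        rw [← Sp_neg]
        refine Sp_congr (fun a b => ?_)
        simp only [shSumU, show k+1-i = k-i+1 from by omega]
        have hcond : (a.length = n - 2*i - 1 ∧ b.length + 2 = m - 2*(k-i) - 1)
            ↔ (a.length = n - 2*i - 1 ∧ b.length = m - 2*(k-i) - 3) := by omega
        simp only [hcond]
        split
        · rfl
        · rw [neg_zero]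
      · by_cases hg : 2*i + 1 ≤ n ∧ 2*(k-i) + 1 ≤ m
        · rw [if_pos hg, if_neg hgp, neg_zero]
          rw [Sp_congr (G := fun _ _ => (0:S)) (fun a b => by
            rw [if_neg (fun h => by have := h.2; omega)]), Sp_zero]
        · rw [if_neg hg, if_neg hgp, neg_zero]

end Theorems
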